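/- Fix a finite discrete interval Λ ⊂ ℤ, z ∈ ℂ, and constants F, ξ, θ > 0, and suppose that E(‖P_-^{A'} R_z^Λ P_+^{B'}‖^{1/4}) ≤ F |Λ|^{ξ} e^{−θ · dist_Λ(A', B'^c)} holds for all A' ⊂ B' ⊂ Λ with A' connected in Λ. Then for all A ⊂ B ⊂ Λ with A not necessarily connected in Λ, one has E(‖P_-^{A} R_z^Λ P_+^{B}‖^{1/4}) ≤ F · Υ_A^Λ · |Λ|^{ξ} e^{−θ · dist_Λ(A, B^c)}, where Υ_A^Λ is the number of connected components of A in Λ. -/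

import Mathlib

open scoped BigOperators ENNReal
open MeasureTheory

noncomputable section

namespace XXZ

/-- A (finite) discrete interval: a set of integers closed under betweenness. -/
def IsInterval (A : Finset ℤ) : Prop :=
  ∀ x ∈ A, ∀ y ∈ A, ∀ z : ℤ, x ≤ z → z ≤ y → z ∈ A

/-- distance between two finite subsets of ℤ (junk value 0 if one is empty). -/
def fdist (A B : Finset ℤ) : ℝ :=
  sInf ((fun p : ℤ × ℤ => |(p.1 : ℝ) - (p.2 : ℝ)|) '' ↑(A ×ˢ B))

/-- `[M]_s^Λ`, the `s`-neighborhood of `M` inside `Λ`. -/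
def thick (Λ M : Finset ℤ) (s : ℕ) : Finset ℤ :=
  Λ.filter fun x => ∃ y ∈ M, (x - y).natAbs ≤ s

/-- `[M]_{-s}^Λ = {x ∈ M : dist(x, Λ\M) > s}`. -/
def innerThick (Λ M : Finset ℤ) (s : ℕ) : Finset ℤ :=
  M.filter fun x => ∀ y ∈ Λ \ M, (s : ℤ) < |x - y|

/-- `∂_s^Λ M = [M]_s^Λ \ [M]_{-s}^Λ`. -/
def bdry (Λ M : Finset ℤ) (s : ℕ) : Finset ℤ := thick Λ M s \ innerThick Λ M s

/-- number of connected components of `A` (as a subset of an interval `Λ ⊆ ℤ`). -/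
def numComponents (A : Finset ℤ) : ℕ := (A.filter fun x => x - 1 ∉ A).card

/-- spin configurations over `Λ`; `true` at a site means a particle (spin down). -/
abbrev Cfg (Λ : Finset ℤ) := (↥Λ) → Bool

/-- the Hilbert space `⨂_{i∈Λ} ℂ²`, realized as `ℓ²` of configurations. -/
abbrev HS (Λ : Finset ℤ) := EuclideanSpace ℂ (Cfg Λ)

abbrev Op (Λ : Finset ℤ) := HS Λ →L[ℂ] HS Λ

abbrev Mat (Λ : Finset ℤ) := Matrix (Cfg Λ) (Cfg Λ) ℂ

variable (Λ : Finset ℤ)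

def toOp (M : Mat Λ) : Op Λ := Matrix.toEuclideanCLM (𝕜 := ℂ) M

def toMat (T : Op Λ) : Mat Λ := (Matrix.toEuclideanCLM (𝕜 := ℂ)).symm T

/-- the local number operator `𝒩_i` (the copy of `½(1−σ^z)` at site `i`). -/
def NMat (i : ℤ) : Mat Λ :=
  Matrix.diagonal fun σ => if h : i ∈ Λ then (if σ ⟨i, h⟩ then 1 else 0) else 0

def NOp (i : ℤ) : Op Λ := toOp Λ (NMat Λ i)

/-- `P_+^S`: orthogonal projection onto states with no particles in `S`. -/
def PplusMat (S : Finset ℤ) : Mat Λ :=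
  Matrix.diagonal fun σ => if ∀ i : ↥Λ, (i : ℤ) ∈ S → σ i = false then 1 else 0

def Pplus (S : Finset ℤ) : Op Λ := toOp Λ (PplusMat Λ S)

/-- `P_-^S = 1 - P_+^S`. -/
def Pminus (S : Finset ℤ) : Op Λ := 1 - Pplus Λ S

/-- the configuration with the values at `i` and `i+1` exchanged. -/
def swapCfg (i : ℤ) (σ : Cfg Λ) : Cfg Λ := fun j =>
  if (j : ℤ) = i then (if h : i + 1 ∈ Λ then σ ⟨i + 1, h⟩ else σ j)
  else if (j : ℤ) = i + 1 then (if h : i ∈ Λ then σ ⟨i, h⟩ else σ j)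
  else σ j

/-- the hopping term `σ_i^+σ_{i+1}^- + σ_i^-σ_{i+1}^+`. -/
def hopMat (i : ℤ) : Mat Λ := fun σ τ =>
  if hi : i ∈ Λ then
    if hi1 : i + 1 ∈ Λ then
      (if τ ⟨i, hi⟩ ≠ τ ⟨i + 1, hi1⟩ ∧ σ = swapCfg Λ i τ then 1 else 0)
    else 0
  else 0

/-- `h_{i,i+1} = -𝒩_i 𝒩_{i+1} - (2Δ)⁻¹ (σ_i^+σ_{i+1}^- + σ_i^-σ_{i+1}^+)`. -/
def hMat (Δ : ℝ) (i : ℤ) : Mat Λ :=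
  -(NMat Λ i * NMat Λ (i + 1)) - ((2 * Δ : ℂ))⁻¹ • hopMat Λ i

/-- the XXZ Hamiltonian on a subset `S ⊆ Λ`, acting on `H_Λ`:
`Σ_{{i,i+1}⊆S} h_{i,i+1} + Σ_{i∈S} 𝒩_i + λ Σ_{i∈S} ω_i 𝒩_i`. -/
def HonMat (Δ lam : ℝ) (ω : ℤ → ℝ) (S : Finset ℤ) : Mat Λ :=
  (∑ i ∈ S.filter (fun i => i + 1 ∈ S), hMat Λ Δ i)
    + (∑ i ∈ S, NMat Λ i)
    + (lam : ℂ) • (∑ i ∈ S, (ω i : ℂ) • NMat Λ i)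

/-- the random XXZ Hamiltonian `H^Λ = H_0^Λ + λ Σ_{i∈Λ} ω_i 𝒩_i`. -/
def HOp (Δ lam : ℝ) (ω : ℤ → ℝ) : Op Λ := toOp Λ (HonMat Λ Δ lam ω Λ)

/-- the free Hamiltonian `H_0^Λ`. -/
def H0Op (Δ : ℝ) : Op Λ :=
  toOp Λ ((∑ i ∈ Λ.filter (fun i => i + 1 ∈ Λ), hMat Λ Δ i) + ∑ i ∈ Λ, NMat Λ i)

/-- the decoupled Hamiltonian `H^{A,A^c} = H^A + H^{A^c}` on `H_Λ`. -/
def HdecOp (Δ lam : ℝ) (ω : ℤ → ℝ) (A : Finset ℤ) : Op Λ :=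
  toOp Λ (HonMat Λ Δ lam ω A + HonMat Λ Δ lam ω (Λ \ A))

/-- the number-of-clusters operator `W^Λ = 𝒩^Λ - Σ 𝒩_i 𝒩_{i+1}`. -/
def WOp : Op Λ :=
  toOp Λ ((∑ i ∈ Λ, NMat Λ i)
    - ∑ i ∈ Λ.filter (fun i => i + 1 ∈ Λ), NMat Λ i * NMat Λ (i + 1))

/-- total number operator `𝒩^Λ`. -/
def NtotOp : Op Λ := toOp Λ (∑ i ∈ Λ, NMat Λ i)

/-- spectral projection `χ_I(T)` (via the continuous functional calculus;
for a self-adjoint `T` the spectrum is finite, so every function is continuous on it). -/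
def specProj (T : Op Λ) (I : Set ℝ) : Op Λ :=
  cfc (fun x : ℝ => I.indicator (fun _ => (1 : ℝ)) x) T

/-- `f(T)` for a real-valued (Borel) function `f`. -/
def opFun (T : Op Λ) (f : ℝ → ℝ) : Op Λ := cfc f T

/-- resolvent `(T - z)⁻¹` (junk value `0` when not invertible). -/
def res (T : Op Λ) (z : ℂ) : Op Λ := Ring.inverse (T - z • 1)

/-- the unitary `e^{itT}`. -/
def uexp (T : Op Λ) (t : ℝ) : Op Λ := (NormedSpace.expSeries ℂ (Op Λ)).sum ((Complex.I * (t : ℂ)) • T)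

/-- Heisenberg evolution `τ_t(T) = e^{itH} T e^{-itH}`. -/
def heis (H : Op Λ) (t : ℝ) (T : Op Λ) : Op Λ := uexp Λ H t * T * uexp Λ H (-t)

/-- the deformed Hamiltonian `Ĥ_k^Λ`. -/
def Hhat (Δ lam : ℝ) (ω : ℤ → ℝ) (k : ℕ) : Op Λ :=
  if k = 0 then HOp Λ Δ lam ω + ((1 - 1 / Δ : ℝ) : ℂ) • specProj Λ (WOp Λ) {0}
  else HOp Λ Δ lam ω + ((k * (1 - 1 / Δ) : ℝ) : ℂ) •
    (specProj Λ (WOp Λ) (Set.Icc 1 k)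
      + (((k + 1 : ℝ) / k : ℝ) : ℂ) • specProj Λ (WOp Λ) {0})

/-- support predicate, on matrices: `M` acts as `M_A ⊗ I_{A^c}`. -/
def MatSupportedOn (M : Mat Λ) (A : Finset ℤ) : Prop :=
  (∀ σ τ : Cfg Λ, M σ τ ≠ 0 → ∀ i : ↥Λ, (i : ℤ) ∉ A → σ i = τ i) ∧
  (∀ σ τ σ' τ' : Cfg Λ,
    (∀ i : ↥Λ, (i : ℤ) ∈ A → (σ i = σ' i ∧ τ i = τ' i)) →
    (∀ i : ↥Λ, (i : ℤ) ∉ A → (σ i = τ i ∧ σ' i = τ' i)) → M σ τ = M σ' τ')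

/-- an observable on `H_Λ` is supported on `A ⊆ Λ` if it has the form `T_A ⊗ I`. -/
def SupportedOn (T : Op Λ) (A : Finset ℤ) : Prop := MatSupportedOn Λ (toMat Λ T) A

/-- the rank-one projection `π_M` onto the canonical basis vector `φ_M`. -/
def piProj (M : Finset ℤ) : Op Λ :=
  toOp Λ (Matrix.diagonal fun σ => if σ = (fun i : ↥Λ => decide ((i : ℤ) ∈ M)) then 1 else 0)

/-- the all-spins-up vacuum vector `Ω_Λ`. -/
def vac : HS Λ := EuclideanSpace.single (fun _ => false) 1

/-- extension of a field on `Λ` to `ℤ` by zero. -/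
def extend (ω : ↥Λ → ℝ) : ℤ → ℝ := fun i => if h : i ∈ Λ then ω ⟨i, h⟩ else 0

/-- expectation with respect to the i.i.d. field `{ω_i}_{i∈Λ}` with single-site measure `μ`. -/
def expec (μ : Measure ℝ) (F : (ℤ → ℝ) → ℝ) : ℝ :=
  ∫ ω : ↥Λ → ℝ, F (extend Λ ω) ∂(Measure.pi fun _ => μ)

/-- Borel functions vanishing outside `J` and bounded by `1`. -/
def B1 (J : Set ℝ) : Set (ℝ → ℝ) :=
  {f | Measurable f ∧ (∀ x, x ∉ J → f x = 0) ∧ ∀ x, |f x| ≤ 1}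

/-- `⟨t⟩ = (1+t²)^{1/2}`. -/
def jap (t : ℝ) : ℝ := Real.sqrt (1 + t ^ 2)

/-- the assumptions on the single-site distribution `μ`: a probability measure,
absolutely continuous with bounded density, with `{0,1} ⊆ supp μ ⊆ [0,1]`. -/
structure SingleSite (μ : Measure ℝ) : Prop where
  prob : IsProbabilityMeasure μ
  ac : μ ≪ volume
  bounded : ∃ C : ℝ≥0∞, C ≠ ⊤ ∧ ∀ᵐ x ∂volume, μ.rnDeriv volume x ≤ C
  supp_sub : μ (Set.Icc 0 1) = 1
  zero_mem : ∀ ε > 0, 0 < μ (Set.Ioo (-ε) ε)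
  one_mem : ∀ ε > 0, 0 < μ (Set.Ioo (1 - ε) (1 + ε))

/-- Condition `L_r`: quasi-locality (localization) on the energy interval
`Ǐ_{≤r} = (-∞, (r+7/8)(1-1/Δ)]`, with constants `ξ_r, θ_r` (and some `F_r`). -/
def ConditionL (μ : Measure ℝ) (Δ₀ lam0 Δ lam r ξ θ : ℝ) : Prop :=
  Δ₀ ≤ Δ ∧ lam0 ≤ lam ∧ 0 < ξ ∧ 0 < θ ∧
  ∃ F : ℝ, 0 < F ∧
    ∀ Λ : Finset ℤ, Λ.Nonempty → IsInterval Λ →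
    ∀ A B : Finset ℤ, A ⊆ B → B ⊆ Λ → IsInterval A →
      (expec Λ μ (fun ω =>
          ⨆ f ∈ B1 (Set.Iic ((r + 7 / 8) * (1 - 1 / Δ))),
            ‖Pminus Λ A * opFun Λ (HOp Λ Δ lam ω) f * Pplus Λ B‖)
        ≤ F * (Λ.card : ℝ) ^ ξ * Real.exp (-θ * fdist A (Λ \ B))) ∧
      ∀ z : ℂ, z.re ≤ (r + 7 / 8) * (1 - 1 / Δ) →
        expec Λ μ (fun ω =>
            ‖Pminus Λ A * res Λ (HOp Λ Δ lam ω) z * Pplus Λ B‖ ^ ((1 : ℝ) / 4))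
          ≤ F * (Λ.card : ℝ) ^ ξ * Real.exp (-θ * fdist A (Λ \ B))

/-- `β_{n/2}`:  `β_0 = 0`,  `β_q = β_{q-1/2} + 9⌈q⌉ + 13`. -/
def betaN : ℕ → ℕ
  | 0 => 0
  | n + 1 => betaN n + 9 * ((n + 2) / 2) + 13

end XXZ

namespace XXZ

section Aux

open scoped NNReal

/-- `Ring.inverse` is measurable on a normed ring with summable geometric series. -/
theorem meas_ring_inverse' {R : Type*} [NormedRing R] [HasSummableGeomSeries R]
    [MeasurableSpace R] [BorelSpace R] : Measurable (Ring.inverse : R → R) := by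
  classical
  have hU : IsOpen {x : R | IsUnit x} := Units.isOpen
  have hco : ContinuousOn (Ring.inverse : R → R) {x : R | IsUnit x} := fun x hx =>
    (NormedRing.inverse_continuousAt hx.unit).continuousWithinAt
  have heq : (Ring.inverse : R → R) = Set.piecewise {x : R | IsUnit x} Ring.inverse 0 := by
    ext x
    by_cases hx : IsUnit x
    · simp [Set.piecewise, hx]
    · simp [Set.piecewise, hx, Ring.inverse_non_unit x hx]
  rw [heq]
  exact ContinuousOn.measurable_piecewise hco continuous_zero.continuousOn hU.measurableSet

variable (Λ : Finset ℤ)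

lemma PplusMat_union (S T : Finset ℤ) :
    PplusMat Λ (S ∪ T) = PplusMat Λ S * PplusMat Λ T := by
  unfold PplusMat
  rw [Matrix.diagonal_mul_diagonal]
  refine congrArg Matrix.diagonal (funext fun σ => ?_)
  by_cases hS : ∀ i : ↥Λ, (i : ℤ) ∈ S → σ i = false
  · by_cases hT : ∀ i : ↥Λ, (i : ℤ) ∈ T → σ i = false
    · rw [if_pos hS, if_pos hT, if_pos]
      · simp
      · intro i hi
        rcases Finset.mem_union.mp hi with h | h
        · exact hS i h
        · exact hT i h
    · rw [if_pos hS, if_neg hT, if_neg]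
      · simp
      · intro hST
        exact hT fun i hi => hST i (Finset.mem_union.mpr (Or.inr hi))
  · rw [if_neg hS, if_neg]
    · simp
    · intro hST
      exact hS fun i hi => hST i (Finset.mem_union.mpr (Or.inl hi))

lemma Pplus_union (S T : Finset ℤ) : Pplus Λ (S ∪ T) = Pplus Λ S * Pplus Λ T := by
  unfold Pplus toOp
  rw [PplusMat_union, map_mul]

lemma Pplus_empty : Pplus Λ (∅ : Finset ℤ) = 1 := by
  unfold Pplus toOp PplusMat
  have h1 : (Matrix.diagonal fun σ : Cfg Λ =>
      if ∀ i : ↥Λ, (i : ℤ) ∈ (∅ : Finset ℤ) → σ i = false then (1:ℂ) else 0) = 1 := by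
    simp
  rw [h1, map_one]

lemma Pminus_empty : Pminus Λ (∅ : Finset ℤ) = 0 := by
  unfold Pminus; rw [Pplus_empty]; simp

lemma Pplus_star (S : Finset ℤ) : star (Pplus Λ S) = Pplus Λ S := by
  unfold Pplus toOp
  rw [← map_star]
  congr 1
  unfold PplusMat
  rw [Matrix.star_eq_conjTranspose, Matrix.diagonal_conjTranspose]
  refine congrArg Matrix.diagonal (funext fun σ => ?_)
  simp [Pi.star_apply, apply_ite (star : ℂ → ℂ)]

lemma Pplus_sq (S : Finset ℤ) : Pplus Λ S * Pplus Λ S = Pplus Λ S := by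
  rw [← Pplus_union, Finset.union_self]

lemma norm_proj_le_one (p : Op Λ) (h1 : p * p = p) (h2 : star p = p) : ‖p‖ ≤ 1 := by
  have := CStarRing.norm_star_mul_self (x := p)
  rw [h2, h1] at this
  nlinarith [norm_nonneg p]

lemma norm_Pplus_le_one (S : Finset ℤ) : ‖Pplus Λ S‖ ≤ 1 :=
  norm_proj_le_one Λ _ (Pplus_sq Λ S) (Pplus_star Λ S)

lemma Pminus_sq (S : Finset ℤ) : Pminus Λ S * Pminus Λ S = Pminus Λ S := by
  unfold Pminus
  rw [sub_mul, one_mul, mul_sub, mul_one, Pplus_sq]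
  abel

lemma Pminus_star (S : Finset ℤ) : star (Pminus Λ S) = Pminus Λ S := by
  unfold Pminus
  rw [star_sub (R := Op Λ) 1 (Pplus Λ S), star_one, Pplus_star]

lemma norm_Pminus_le_one (S : Finset ℤ) : ‖Pminus Λ S‖ ≤ 1 :=
  norm_proj_le_one Λ _ (Pminus_sq Λ S) (Pminus_star Λ S)

lemma Pminus_absorb {S A : Finset ℤ} (h : S ⊆ A) :
    Pminus Λ S * Pminus Λ A = Pminus Λ S := by
  have h1 : Pplus Λ S * Pplus Λ A = Pplus Λ A := by
    rw [← Pplus_union, Finset.union_eq_right.mpr h]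
  unfold Pminus
  rw [sub_mul, one_mul, mul_sub, mul_one, h1]
  abel

lemma Pminus_decomp {A A₁ A' : Finset ℤ} (h : A = A₁ ∪ A') :
    Pminus Λ A = Pminus Λ A₁ + Pplus Λ A₁ * Pminus Λ A' := by
  subst h
  unfold Pminus
  rw [Pplus_union, mul_sub, mul_one]
  abel

lemma norm_Pminus_mul_le {S A : Finset ℤ} (h : S ⊆ A) (X : Op Λ) :
    ‖Pminus Λ S * X‖ ≤ ‖Pminus Λ A * X‖ := by
  have h1 : Pminus Λ S * X = Pminus Λ S * (Pminus Λ A * X) := by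
    rw [← mul_assoc, Pminus_absorb Λ h]
  rw [h1]
  calc ‖Pminus Λ S * (Pminus Λ A * X)‖ ≤ ‖Pminus Λ S‖ * ‖Pminus Λ A * X‖ := norm_mul_le _ _
    _ ≤ 1 * ‖Pminus Λ A * X‖ :=
        mul_le_mul_of_nonneg_right (norm_Pminus_le_one Λ S) (norm_nonneg _)
    _ = ‖Pminus Λ A * X‖ := one_mul _

lemma norm_Pminus_split {A A₁ A' : Finset ℤ} (h : A = A₁ ∪ A') (X : Op Λ) :
    ‖Pminus Λ A * X‖ ≤ ‖Pminus Λ A₁ * X‖ + ‖Pminus Λ A' * X‖ := by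
  rw [Pminus_decomp Λ h, add_mul, mul_assoc]
  refine (norm_add_le _ _).trans (add_le_add (le_refl _) ?_)
  calc ‖Pplus Λ A₁ * (Pminus Λ A' * X)‖ ≤ ‖Pplus Λ A₁‖ * ‖Pminus Λ A' * X‖ := norm_mul_le _ _
    _ ≤ 1 * ‖Pminus Λ A' * X‖ :=
        mul_le_mul_of_nonneg_right (norm_Pplus_le_one Λ A₁) (norm_nonneg _)
    _ = ‖Pminus Λ A' * X‖ := one_mul _

lemma continuous_toOp : Continuous (toOp Λ) :=
  LinearMap.continuous_of_finiteDimensional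
    ({ toFun := toOp Λ, map_add' := fun a b => map_add _ a b,
       map_smul' := fun c a => map_smul (Matrix.toEuclideanCLM (𝕜 := ℂ)) c a } :
      Mat Λ →ₗ[ℂ] Op Λ)

lemma continuous_HOp (Δ lam : ℝ) :
    Continuous fun ω : ↥Λ → ℝ => HOp Λ Δ lam (extend Λ ω) := by
  apply (continuous_toOp Λ).comp
  unfold HonMat
  apply Continuous.add
  · exact continuous_const
  · apply Continuous.fun_const_smul
    apply continuous_finset_sum
    intro i _
    apply Continuous.fun_smul _ continuous_const
    by_cases h : i ∈ Λ
    · simp only [extend, dif_pos h]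
      exact Complex.continuous_ofReal.comp (continuous_apply _)
    · simp only [extend, dif_neg h]
      exact continuous_const

lemma meas_integrand (S B : Finset ℤ) (Δ lam : ℝ) (z : ℂ) :
    Measurable fun ω : ↥Λ → ℝ =>
      ‖Pminus Λ S * res Λ (HOp Λ Δ lam (extend Λ ω)) z * Pplus Λ B‖ ^ ((1:ℝ)/4) := by
  have c1 : Continuous fun ω : ↥Λ → ℝ => HOp Λ Δ lam (extend Λ ω) - z • 1 :=
    (continuous_HOp Λ Δ lam).sub continuous_const
  have m1 : Measurable fun ω : ↥Λ → ℝ => res Λ (HOp Λ Δ lam (extend Λ ω)) z := by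
    unfold res
    exact meas_ring_inverse'.comp c1.measurable
  have c2 : Continuous fun X : Op Λ => ‖Pminus Λ S * X * Pplus Λ B‖ :=
    ((continuous_const.mul continuous_id).mul continuous_const).norm
  have c3 : Continuous fun x : ℝ => x ^ ((1:ℝ)/4) :=
    Real.continuous_rpow_const (by norm_num)
  exact (c3.comp c2).measurable.comp m1

lemma rpow_quarter_add {a b : ℝ} (ha : 0 ≤ a) (hb : 0 ≤ b) :
    (a + b) ^ ((1:ℝ)/4) ≤ a ^ ((1:ℝ)/4) + b ^ ((1:ℝ)/4) := by
  have h := NNReal.rpow_add_le_add_rpow a.toNNReal b.toNNReal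
    (by norm_num : (0:ℝ) ≤ 1/4) (by norm_num : (1:ℝ)/4 ≤ 1)
  have h2 : ((a.toNNReal + b.toNNReal : ℝ≥0) : ℝ) = a + b := by
    push_cast
    rw [Real.coe_toNNReal _ ha, Real.coe_toNNReal _ hb]
  calc (a + b) ^ ((1:ℝ)/4) = (((a.toNNReal + b.toNNReal : ℝ≥0) : ℝ)) ^ ((1:ℝ)/4) := by rw [h2]
    _ = (((a.toNNReal + b.toNNReal) ^ ((1:ℝ)/4) : ℝ≥0) : ℝ) := by rw [NNReal.coe_rpow]
    _ ≤ ((a.toNNReal ^ ((1:ℝ)/4) + b.toNNReal ^ ((1:ℝ)/4) : ℝ≥0) : ℝ) := by exact_mod_cast h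
    _ = a ^ ((1:ℝ)/4) + b ^ ((1:ℝ)/4) := by
        push_cast [NNReal.coe_rpow, Real.coe_toNNReal _ ha, Real.coe_toNNReal _ hb]
        ring

lemma fdist_anti {A' A S : Finset ℤ} (h1 : A'.Nonempty) (h2 : A' ⊆ A) :
    fdist A S ≤ fdist A' S := by
  rcases S.eq_empty_or_nonempty with hS | hS
  · subst hS
    simp [fdist]
  · apply csInf_le_csInf
    · refine ⟨0, ?_⟩
      rintro r ⟨p, _, rfl⟩
      exact abs_nonneg _
    · obtain ⟨a, ha⟩ := h1
      obtain ⟨s, hs⟩ := hS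
      exact ⟨_, ⟨(a, s), by simp [Finset.mem_product, ha, hs], rfl⟩⟩
    · apply Set.image_mono
      exact_mod_cast Finset.product_subset_product h2 (Finset.Subset.refl S)

lemma numComp_split {A : Finset ℤ} (hA : A.Nonempty) :
    ∃ A₁ : Finset ℤ, A₁ ⊆ A ∧ A₁.Nonempty ∧ IsInterval A₁ ∧
      A = A₁ ∪ (A \ A₁) ∧ (A \ A₁) ⊂ A ∧
      numComponents A = numComponents (A \ A₁) + 1 := by
  classical
  set a := A.min' hA with ha_def
  have haA : a ∈ A := A.min'_mem hA
  set A₁ := A.filter (fun x => ∀ y : ℤ, a ≤ y → y ≤ x → y ∈ A) with hA₁_def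
  have hA₁A : A₁ ⊆ A := Finset.filter_subset _ _
  have haA₁ : a ∈ A₁ := by
    rw [hA₁_def, Finset.mem_filter]
    exact ⟨haA, fun y h1 h2 => by rwa [le_antisymm h2 h1]⟩
  have hmin : ∀ x ∈ A, a ≤ x := fun x hx => A.min'_le x hx
  have hmemA₁ : ∀ x, x ∈ A₁ ↔ (x ∈ A ∧ ∀ y : ℤ, a ≤ y → y ≤ x → y ∈ A) := by
    intro x; rw [hA₁_def, Finset.mem_filter]
  refine ⟨A₁, hA₁A, ⟨a, haA₁⟩, ?_, ?_, ?_, ?_⟩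
  · intro x hx y hy w hxw hwy
    rw [hmemA₁] at hx hy ⊢
    refine ⟨hy.2 w ((hmin x hx.1).trans hxw) hwy, fun u hu huw => hy.2 u hu (huw.trans hwy)⟩
  · exact (Finset.union_sdiff_of_subset hA₁A).symm
  · exact Finset.sdiff_ssubset hA₁A ⟨a, haA₁⟩
  · unfold numComponents
    have hkey : A.filter (fun x => x - 1 ∉ A)
        = insert a ((A \ A₁).filter (fun x => x - 1 ∉ A \ A₁)) := by
      ext x
      simp only [Finset.mem_filter, Finset.mem_insert, Finset.mem_sdiff]
      constructor
      · rintro ⟨hxA, hx1⟩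
        by_cases hxa : x = a
        · exact Or.inl hxa
        · refine Or.inr ⟨⟨hxA, ?_⟩, fun ⟨h1, _⟩ => hx1 h1⟩
          rw [hmemA₁]
          rintro ⟨-, hint⟩
          have hax : a < x := lt_of_le_of_ne (hmin x hxA) (Ne.symm hxa)
          exact hx1 (hint (x-1) (by omega) (by omega))
      · rintro (rfl | ⟨⟨hxA, hxA₁⟩, hx1⟩)
        · refine ⟨haA, fun h => ?_⟩
          have := hmin _ h
          omega
        · refine ⟨hxA, fun hx1A : x - 1 ∈ A => ?_⟩
          by_cases hc : x - 1 ∈ A₁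
          · apply hxA₁
            rw [hmemA₁] at hc ⊢
            refine ⟨hxA, fun u hu hux => ?_⟩
            rcases eq_or_lt_of_le hux with rfl | hlt
            · exact hxA
            · exact hc.2 u hu (by omega)
          · exact hx1 ⟨hx1A, hc⟩
    rw [hkey, Finset.card_insert_of_notMem]
    intro hmem
    rw [Finset.mem_filter, Finset.mem_sdiff] at hmem
    exact hmem.1.2 haA₁

end Aux

/-- Remark 2.2: quasi-locality for disconnected `A`. -/
theorem resolvent_quasi_locality_disconnected
    (μ : Measure ℝ) (Δ lam : ℝ)
    (Λ : Finset ℤ) (hΛ : Λ.Nonempty) (hΛi : IsInterval Λ) (z : ℂ)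
    (F ξ θ : ℝ) (hF : 0 < F) (hξ : 0 < ξ) (hθ : 0 < θ)
    (h : ∀ A' B' : Finset ℤ, A' ⊆ B' → B' ⊆ Λ → IsInterval A' →
      expec Λ μ (fun ω =>
          ‖Pminus Λ A' * res Λ (HOp Λ Δ lam ω) z * Pplus Λ B'‖ ^ ((1 : ℝ) / 4))
        ≤ F * (Λ.card : ℝ) ^ ξ * Real.exp (-θ * fdist A' (Λ \ B'))) :
    ∀ A B : Finset ℤ, A ⊆ B → B ⊆ Λ →
      expec Λ μ (fun ω =>
          ‖Pminus Λ A * res Λ (HOp Λ Δ lam ω) z * Pplus Λ B‖ ^ ((1 : ℝ) / 4))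
        ≤ F * (numComponents A : ℝ) * (Λ.card : ℝ) ^ ξ
            * Real.exp (-θ * fdist A (Λ \ B)) := by
  classical
  have hexp : ∀ S : Finset ℤ, ∀ B : Finset ℤ,
      expec Λ μ (fun ω => ‖Pminus Λ S * res Λ (HOp Λ Δ lam ω) z * Pplus Λ B‖ ^ ((1:ℝ)/4))
        = ∫ ω : ↥Λ → ℝ,
            ‖Pminus Λ S * res Λ (HOp Λ Δ lam (extend Λ ω)) z * Pplus Λ B‖ ^ ((1:ℝ)/4)
            ∂(Measure.pi fun _ : ↥Λ => μ) := fun S B => rfl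
  intro A B hAB hBΛ
  -- the empty case
  have hempty : expec Λ μ (fun ω =>
        ‖Pminus Λ (∅ : Finset ℤ) * res Λ (HOp Λ Δ lam ω) z * Pplus Λ B‖ ^ ((1:ℝ)/4))
      ≤ F * (numComponents (∅ : Finset ℤ) : ℝ) * (Λ.card : ℝ) ^ ξ
          * Real.exp (-θ * fdist (∅ : Finset ℤ) (Λ \ B)) := by
    have h0 : (fun ω : ℤ → ℝ =>
        ‖Pminus Λ (∅ : Finset ℤ) * res Λ (HOp Λ Δ lam ω) z * Pplus Λ B‖ ^ ((1:ℝ)/4))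
        = fun _ => (0:ℝ) := by
      funext ω
      rw [Pminus_empty, zero_mul, zero_mul, norm_zero, Real.zero_rpow (by norm_num)]
    rw [h0]
    have h1 : expec Λ μ (fun _ => (0:ℝ)) = 0 := by
      unfold expec; simp
    have h2 : numComponents (∅ : Finset ℤ) = 0 := by simp [numComponents]
    rw [h1, h2]
    simp
  -- main induction on the cardinality of A
  have key : ∀ n : ℕ, ∀ C : Finset ℤ, C.card ≤ n → C ⊆ B →
      expec Λ μ (fun ω =>
          ‖Pminus Λ C * res Λ (HOp Λ Δ lam ω) z * Pplus Λ B‖ ^ ((1:ℝ)/4))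
        ≤ F * (numComponents C : ℝ) * (Λ.card : ℝ) ^ ξ
            * Real.exp (-θ * fdist C (Λ \ B)) := by
    intro n
    induction n with
    | zero =>
      intro C hC _
      rw [Finset.card_eq_zero.mp (Nat.le_zero.mp hC)]
      exact hempty
    | succ n ih =>
      intro C hCcard hCB
      rcases C.eq_empty_or_nonempty with rfl | hCne
      · exact hempty
      obtain ⟨A₁, hA₁C, hA₁ne, hA₁i, hCu, hssub, hnum⟩ := numComp_split hCne
      have hC'B : C \ A₁ ⊆ B := (Finset.sdiff_subset).trans hCB
      have hC'card : (C \ A₁).card ≤ n := by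
        have := Finset.card_lt_card hssub
        omega
      -- bounds from the hypothesis and the induction hypothesis
      have bound₁ := h A₁ B (hA₁C.trans hCB) hBΛ hA₁i
      have bound' := ih (C \ A₁) hC'card hC'B
      rw [hexp] at bound₁ bound' ⊢
      set R : (↥Λ → ℝ) → Op Λ := fun ω => res Λ (HOp Λ Δ lam (extend Λ ω)) z with hR
      set Q : Op Λ := Pplus Λ B with hQ
      set f : (↥Λ → ℝ) → ℝ := fun ω => ‖Pminus Λ C * R ω * Q‖ ^ ((1:ℝ)/4) with hf
      set g : (↥Λ → ℝ) → ℝ := fun ω => ‖Pminus Λ A₁ * R ω * Q‖ ^ ((1:ℝ)/4) with hg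
      set f' : (↥Λ → ℝ) → ℝ := fun ω => ‖Pminus Λ (C \ A₁) * R ω * Q‖ ^ ((1:ℝ)/4) with hf'
      have hf0 : ∀ ω, 0 ≤ f ω := fun ω => Real.rpow_nonneg (norm_nonneg _) _
      have hg0 : ∀ ω, 0 ≤ g ω := fun ω => Real.rpow_nonneg (norm_nonneg _) _
      have hf'0 : ∀ ω, 0 ≤ f' ω := fun ω => Real.rpow_nonneg (norm_nonneg _) _
      have hfg : ∀ ω, f ω ≤ g ω + f' ω := by
        intro ω
        have h1 : ‖Pminus Λ C * R ω * Q‖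
            ≤ ‖Pminus Λ A₁ * R ω * Q‖ + ‖Pminus Λ (C \ A₁) * R ω * Q‖ := by
          have := norm_Pminus_split Λ hCu (R ω * Q)
          simpa [mul_assoc] using this
        calc f ω ≤ (‖Pminus Λ A₁ * R ω * Q‖ + ‖Pminus Λ (C \ A₁) * R ω * Q‖) ^ ((1:ℝ)/4) :=
              Real.rpow_le_rpow (norm_nonneg _) h1 (by norm_num)
          _ ≤ g ω + f' ω := rpow_quarter_add (norm_nonneg _) (norm_nonneg _)
      have hgf : ∀ ω, g ω ≤ f ω := by
        intro ω
        refine Real.rpow_le_rpow (norm_nonneg _) ?_ (by norm_num)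
        have := norm_Pminus_mul_le Λ hA₁C (R ω * Q)
        simpa [mul_assoc] using this
      have hf'f : ∀ ω, f' ω ≤ f ω := by
        intro ω
        refine Real.rpow_le_rpow (norm_nonneg _) ?_ (by norm_num)
        have := norm_Pminus_mul_le Λ (Finset.sdiff_subset (s := C) (t := A₁)) (R ω * Q)
        simpa [mul_assoc] using this
      have hmf : Measurable f := meas_integrand Λ C B Δ lam z
      have hmg : Measurable g := meas_integrand Λ A₁ B Δ lam z
      have hmf' : Measurable f' := meas_integrand Λ (C \ A₁) B Δ lam z
      by_cases hint : Integrable f (Measure.pi fun _ : ↥Λ => μ)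
      · have hgint : Integrable g (Measure.pi fun _ : ↥Λ => μ) := by
          refine hint.mono hmg.aestronglyMeasurable (ae_of_all _ fun ω => ?_)
          rw [Real.norm_eq_abs, Real.norm_eq_abs, abs_of_nonneg (hg0 ω), abs_of_nonneg (hf0 ω)]
          exact hgf ω
        have hf'int : Integrable f' (Measure.pi fun _ : ↥Λ => μ) := by
          refine hint.mono hmf'.aestronglyMeasurable (ae_of_all _ fun ω => ?_)
          rw [Real.norm_eq_abs, Real.norm_eq_abs, abs_of_nonneg (hf'0 ω), abs_of_nonneg (hf0 ω)]
          exact hf'f ω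
        have hd₁ : Real.exp (-θ * fdist A₁ (Λ \ B)) ≤ Real.exp (-θ * fdist C (Λ \ B)) := by
          apply Real.exp_le_exp.mpr
          have := fdist_anti (S := Λ \ B) hA₁ne hA₁C
          nlinarith
        have hb₁ : ∫ ω, g ω ∂(Measure.pi fun _ : ↥Λ => μ)
            ≤ F * (Λ.card : ℝ) ^ ξ * Real.exp (-θ * fdist C (Λ \ B)) :=
          bound₁.trans (mul_le_mul_of_nonneg_left hd₁ (mul_nonneg hF.le (Real.rpow_nonneg (Nat.cast_nonneg _) _)))
        have hb' : ∫ ω, f' ω ∂(Measure.pi fun _ : ↥Λ => μ)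
            ≤ F * (numComponents (C \ A₁) : ℝ) * (Λ.card : ℝ) ^ ξ
                * Real.exp (-θ * fdist C (Λ \ B)) := by
          rcases (C \ A₁).eq_empty_or_nonempty with h0 | hC'ne
          · rw [h0] at bound' ⊢
            have h2 : numComponents (∅ : Finset ℤ) = 0 := by simp [numComponents]
            rw [h2] at bound' ⊢
            simpa using bound'
          · refine bound'.trans ?_
            have hd' : Real.exp (-θ * fdist (C \ A₁) (Λ \ B))
                ≤ Real.exp (-θ * fdist C (Λ \ B)) := by
              apply Real.exp_le_exp.mpr
              have := fdist_anti (S := Λ \ B) hC'ne (Finset.sdiff_subset (s := C) (t := A₁))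
              nlinarith
            exact mul_le_mul_of_nonneg_left hd' (mul_nonneg (mul_nonneg hF.le (Nat.cast_nonneg _)) (Real.rpow_nonneg (Nat.cast_nonneg _) _))
        have hcast : (numComponents C : ℝ) = (numComponents (C \ A₁) : ℝ) + 1 := by
          rw [hnum]; push_cast; ring
        calc ∫ ω, f ω ∂(Measure.pi fun _ : ↥Λ => μ)
            ≤ ∫ ω, (g + f') ω ∂(Measure.pi fun _ : ↥Λ => μ) :=
              integral_mono hint (hgint.add hf'int) (fun ω => hfg ω)
          _ = (∫ ω, g ω ∂(Measure.pi fun _ : ↥Λ => μ))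
              + ∫ ω, f' ω ∂(Measure.pi fun _ : ↥Λ => μ) := integral_add hgint hf'int
          _ ≤ (F * (Λ.card : ℝ) ^ ξ * Real.exp (-θ * fdist C (Λ \ B)))
              + F * (numComponents (C \ A₁) : ℝ) * (Λ.card : ℝ) ^ ξ
                * Real.exp (-θ * fdist C (Λ \ B)) := add_le_add hb₁ hb'
          _ = F * (numComponents C : ℝ) * (Λ.card : ℝ) ^ ξ
                * Real.exp (-θ * fdist C (Λ \ B)) := by
              rw [hcast]; ring
      · rw [integral_undef hint]
        exact mul_nonneg (mul_nonneg (mul_nonneg hF.le (Nat.cast_nonneg _)) (Real.rpow_nonneg (Nat.cast_nonneg _) _)) (Real.exp_pos _).le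
  exact key A.card A le_rfl hAB

end XXZ
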